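/- With η as in the Poisson–hurdle single-period kernel η(0, θ) = 1 − σ(c+θ), η(y, θ) = σ(c+θ) e^{−λ(d+θ)} λ(d+θ)^{y−1}/(y−1)! for y ≥ 1, with λ differentiable, the map θ ↦ η(y+1, θ)/η(y, θ) is nondecreasing in θ for every y ∈ ℤ≥0 if and only if 0 ≤ λ'(d+θ) ≤ 1 for all θ ∈ ℝ. -/

import Mathlib

open Real

noncomputable def logistic (x : ℝ) : ℝ := (1 + Real.exp (-x))⁻¹

lemma logistic_pos (x : ℝ) : 0 < logistic x := by
  unfold logistic
  positivity

lemma one_sub_logistic (x : ℝ) :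
    1 - logistic x = Real.exp (-x) * (1 + Real.exp (-x))⁻¹ := by
  unfold logistic
  have h : (0:ℝ) < 1 + Real.exp (-x) := by positivity
  field_simp
  ring

lemma monotone_hasDerivAt_nonneg {f : ℝ → ℝ} {f' x : ℝ}
    (hm : Monotone f) (h : HasDerivAt f f' x) : 0 ≤ f' := by
  have ht : Filter.Tendsto (slope f x) (nhdsWithin x {x}ᶜ) (nhds f') :=
    hasDerivAt_iff_tendsto_slope.1 h
  have ht' : Filter.Tendsto (slope f x) (nhdsWithin x (Set.Ioi x)) (nhds f') :=
    ht.mono_left (nhdsWithin_mono x (fun y hy => ne_of_gt (Set.mem_Ioi.1 hy)))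
  refine ge_of_tendsto ht' ?_
  filter_upwards [self_mem_nhdsWithin] with y hy
  have hxy : x < y := Set.mem_Ioi.1 hy
  rw [slope_def_field]
  exact div_nonneg (sub_nonneg.2 (hm hxy.le)) (sub_nonneg.2 hxy.le)

lemma one_sub_logistic_pos (x : ℝ) : 0 < 1 - logistic x := by
  rw [one_sub_logistic]; positivity

/-- For the Poisson–hurdle single-period kernel `η`, the ratio
`θ ↦ η(y+1,θ)/η(y,θ)` is nondecreasing in `θ` for every `y`
if and only if `0 ≤ λ'(d+θ) ≤ 1` for all `θ ∈ ℝ`. -/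
theorem hurdle_kernel_ratio_monotone_iff
    (c d : ℝ) (lam : ℝ → ℝ) (hpos : ∀ x, 0 < lam x)
    (hdiff : Differentiable ℝ lam)
    (η : ℕ → ℝ → ℝ)
    (hη0 : ∀ θ : ℝ, η 0 θ = 1 - logistic (c + θ))
    (hη1 : ∀ (y : ℕ) (θ : ℝ), η (y + 1) θ =
      logistic (c + θ) * Real.exp (-(lam (d + θ))) * (lam (d + θ)) ^ y
        / (Nat.factorial y)) :
    (∀ y : ℕ, Monotone (fun θ : ℝ => η (y + 1) θ / η y θ)) ↔
    (∀ θ : ℝ, 0 ≤ deriv lam (d + θ) ∧ deriv lam (d + θ) ≤ 1) := by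
  -- derivative of θ ↦ lam (d+θ)
  have hg : ∀ θ : ℝ, HasDerivAt (fun θ : ℝ => lam (d + θ)) (deriv lam (d + θ)) θ := by
    intro θ
    have h1 : HasDerivAt (fun θ : ℝ => d + θ) 1 θ := by
      simpa using (hasDerivAt_id θ).const_add d
    have := HasDerivAt.comp θ (hdiff (d + θ)).hasDerivAt h1; rw [mul_one] at this; exact this
  -- ratio at y = 0
  have hr0 : ∀ θ : ℝ, η 1 θ / η 0 θ = Real.exp (c + θ - lam (d + θ)) := by
    intro θ
    rw [hη1 0 θ, hη0 θ, one_sub_logistic]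
    unfold logistic
    have h1 : (0:ℝ) < 1 + Real.exp (-(c + θ)) := by positivity
    have h2 : (0:ℝ) < Real.exp (-(c + θ)) := Real.exp_pos _
    rw [sub_eq_add_neg (c + θ), Real.exp_add]
    rw [show Real.exp (c + θ) = (Real.exp (-(c + θ)))⁻¹ by
      rw [Real.exp_neg]; simp]
    field_simp
    simp
  -- ratio at y + 1
  have hr1 : ∀ (y : ℕ) (θ : ℝ),
      η (y + 2) θ / η (y + 1) θ = lam (d + θ) / (y + 1) := by
    intro y θ
    rw [show y + 2 = (y + 1) + 1 by ring, hη1 (y + 1) θ, hη1 y θ]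
    have hL : (0:ℝ) < logistic (c + θ) := logistic_pos _
    have hE : (0:ℝ) < Real.exp (-(lam (d + θ))) := Real.exp_pos _
    have hlam : (0:ℝ) < lam (d + θ) := hpos _
    have hf1 : ((y + 1).factorial : ℝ) ≠ 0 := Nat.cast_ne_zero.2 (y + 1).factorial_ne_zero
    have hf2 : (y.factorial : ℝ) ≠ 0 := Nat.cast_ne_zero.2 y.factorial_ne_zero
    rw [Nat.factorial_succ]
    push_cast
    field_simp
    ring
  constructor
  · intro H
    intro θ
    constructor
    · -- from y = 1: lam(d+·) monotone
      have h1 := H 1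
      have heq : (fun θ : ℝ => η 2 θ / η 1 θ) = fun θ : ℝ => lam (d + θ) / 1 := by
        funext θ; simpa using hr1 0 θ
      rw [heq] at h1
      have hmono : Monotone (fun θ : ℝ => lam (d + θ)) := by
        intro a b hab; have := h1 hab; simpa using this
      exact monotone_hasDerivAt_nonneg hmono (hg θ)
    · -- from y = 0
      have h0 := H 0
      have heq : (fun θ : ℝ => η 1 θ / η 0 θ)
          = fun θ : ℝ => Real.exp (c + θ - lam (d + θ)) := by
        funext θ; exact hr0 θ
      rw [heq] at h0
      have hmono : Monotone (fun θ : ℝ => c + θ - lam (d + θ)) := by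
        intro a b hab
        have := h0 hab
        exact (Real.exp_le_exp).1 this
      have hd : HasDerivAt (fun θ : ℝ => c + θ - lam (d + θ))
          (1 - deriv lam (d + θ)) θ := by
        have h1 : HasDerivAt (fun θ : ℝ => c + θ) 1 θ := by
          simpa using (hasDerivAt_id θ).const_add c
        exact h1.sub (hg θ)
      have := monotone_hasDerivAt_nonneg hmono hd
      linarith
  · intro H
    have hlmono : Monotone (fun θ : ℝ => lam (d + θ)) := by
      apply monotone_of_deriv_nonneg
      · exact fun θ => (hg θ).differentiableAt
      · intro θ
        rw [(hg θ).deriv]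
        exact (H θ).1
    intro y
    match y with
    | 0 =>
      have heq : (fun θ : ℝ => η 1 θ / η 0 θ)
          = fun θ : ℝ => Real.exp (c + θ - lam (d + θ)) := by
        funext θ; exact hr0 θ
      rw [heq]
      have hmono : Monotone (fun θ : ℝ => c + θ - lam (d + θ)) := by
        apply monotone_of_deriv_nonneg
        · intro θ
          exact ((differentiable_id.const_add c).sub
            (fun θ => (hg θ).differentiableAt) θ)
        · intro θ
          have hd : HasDerivAt (fun θ : ℝ => c + θ - lam (d + θ))
              (1 - deriv lam (d + θ)) θ := by
            have h1 : HasDerivAt (fun θ : ℝ => c + θ) 1 θ := by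
              simpa using (hasDerivAt_id θ).const_add c
            exact h1.sub (hg θ)
          rw [hd.deriv]
          linarith [(H θ).2]
      exact fun a b hab => Real.exp_le_exp.2 (hmono hab)
    | Nat.succ y =>
      have heq : (fun θ : ℝ => η (y + 2) θ / η (y + 1) θ)
          = fun θ : ℝ => lam (d + θ) / (y + 1) := by
        funext θ; exact hr1 y θ
      rw [show y.succ + 1 = y + 2 from rfl, heq]
      intro a b hab
      have hc : (0:ℝ) < (y:ℝ) + 1 := by positivity
      exact div_le_div_of_nonneg_right (hlmono hab) (by positivity)
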